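/- Let 0 < λ < 2√2·δ, set ψ = 8δ/λ (so ψ > 2), μ = 8δ²/λ − λ, γ = λ²/(192δ²), and suppose symmetric matrices H, H₁,…,H_K satisfy λI ⪯ H ⪯ LI, ‖H_k − H‖ ≤ δ, H = (1/K)∑ₖH_k. Then ρ := ‖H̃⁻¹H − I‖ + (γ/K)∑ₖ‖(H_k + μI)⁻¹H‖ ≤ 1 − λ²/(24δ²), where H̃⁻¹ = (1/K)∑ₖ(H_k + μI)⁻¹. -/

import Mathlib

noncomputable def opNorm {d : ℕ} (A : Matrix (Fin d) (Fin d) ℝ) : ℝ :=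
  ‖(Matrix.toEuclideanCLM (𝕜 := ℝ) A : EuclideanSpace ℝ (Fin d) →L[ℝ] EuclideanSpace ℝ (Fin d))‖

namespace Stmt13Aux

open Matrix

set_option synthInstance.maxHeartbeats 1000000
set_option maxHeartbeats 1000000


variable {d : ℕ}

lemma opNorm_nonneg' (A : Matrix (Fin d) (Fin d) ℝ) : 0 ≤ opNorm A := norm_nonneg _

lemma opNorm_neg' (A : Matrix (Fin d) (Fin d) ℝ) : opNorm (-A) = opNorm A := by
  unfold opNorm; rw [map_neg, norm_neg]

lemma opNorm_add_le' (A B : Matrix (Fin d) (Fin d) ℝ) :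
    opNorm (A + B) ≤ opNorm A + opNorm B := by
  unfold opNorm; rw [map_add]; exact norm_add_le _ _

lemma opNorm_sub_le' (A B : Matrix (Fin d) (Fin d) ℝ) :
    opNorm (A - B) ≤ opNorm A + opNorm B := by
  unfold opNorm; rw [map_sub]; exact norm_sub_le _ _

lemma opNorm_mul_le' (A B : Matrix (Fin d) (Fin d) ℝ) :
    opNorm (A * B) ≤ opNorm A * opNorm B := by
  unfold opNorm; rw [_root_.map_mul]; exact norm_mul_le _ _

lemma opNorm_smul' (c : ℝ) (A : Matrix (Fin d) (Fin d) ℝ) :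
    opNorm (c • A) = |c| * opNorm A := by
  unfold opNorm
  rw [_root_.map_smul]
  rw [norm_smul c (Matrix.toEuclideanCLM (𝕜 := ℝ) A :
    EuclideanSpace ℝ (Fin d) →L[ℝ] EuclideanSpace ℝ (Fin d)), Real.norm_eq_abs]

lemma opNorm_one_le' : opNorm (1 : Matrix (Fin d) (Fin d) ℝ) ≤ 1 := by
  unfold opNorm; rw [_root_.map_one, ContinuousLinearMap.one_def]
  exact ContinuousLinearMap.norm_id_le

lemma opNorm_sum_le' {ι : Type*} (s : Finset ι) (f : ι → Matrix (Fin d) (Fin d) ℝ) :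
    opNorm (∑ i ∈ s, f i) ≤ ∑ i ∈ s, opNorm (f i) := by
  unfold opNorm; rw [map_sum]; exact norm_sum_le _ _

lemma inner_toECLM (M : Matrix (Fin d) (Fin d) ℝ) (x : EuclideanSpace ℝ (Fin d)) :
    (inner ℝ x (Matrix.toEuclideanCLM (𝕜 := ℝ) M x) : ℝ) =
      (WithLp.equiv 2 _ x) ⬝ᵥ (M *ᵥ (WithLp.equiv 2 _ x)) := by
  rw [EuclideanSpace.inner_eq_star_dotProduct, Matrix.ofLp_toEuclideanCLM,
    star_trivial, dotProduct_comm]; rfl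

lemma dot_self_eq (x : EuclideanSpace ℝ (Fin d)) :
    (WithLp.equiv 2 _ x) ⬝ᵥ (WithLp.equiv 2 _ x) = ‖x‖ ^ 2 := by
  rw [← real_inner_self_eq_norm_sq, EuclideanSpace.inner_eq_star_dotProduct, star_trivial]; rfl

lemma psd_lower {c : ℝ} {M : Matrix (Fin d) (Fin d) ℝ}
    (h : (M - c • (1 : Matrix (Fin d) (Fin d) ℝ)).PosSemidef) (x : EuclideanSpace ℝ (Fin d)) :
    c * ‖x‖ ^ 2 ≤ inner ℝ x (Matrix.toEuclideanCLM (𝕜 := ℝ) M x) := by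
  have h0 := h.dotProduct_mulVec_nonneg (WithLp.equiv 2 _ x)
  rw [star_trivial, Matrix.sub_mulVec, dotProduct_sub, Matrix.smul_mulVec,
    Matrix.one_mulVec, dotProduct_smul, smul_eq_mul, dot_self_eq] at h0
  rw [inner_toECLM]
  linarith

lemma posdef_of {c : ℝ} (hc : 0 < c) {M : Matrix (Fin d) (Fin d) ℝ}
    (h : (M - c • (1 : Matrix (Fin d) (Fin d) ℝ)).PosSemidef) : M.PosDef := by
  refine Matrix.PosDef.of_dotProduct_mulVec_pos ?_ ?_
  · have h2 : (c • (1 : Matrix (Fin d) (Fin d) ℝ)).IsHermitian := by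
      simp [Matrix.IsHermitian]
    have h3 := h.1.add h2
    simpa using h3
  · intro v hv
    have h0 := h.dotProduct_mulVec_nonneg v
    rw [star_trivial, Matrix.sub_mulVec, dotProduct_sub, Matrix.smul_mulVec,
      Matrix.one_mulVec, dotProduct_smul, smul_eq_mul] at h0
    rw [star_trivial]
    have hnn := dotProduct_self_star_nonneg (R := ℝ) v
    rw [star_trivial] at hnn
    have hne : v ⬝ᵥ v ≠ 0 := fun hz => hv (dotProduct_self_eq_zero.mp hz)
    have hpos : 0 < v ⬝ᵥ v := lt_of_le_of_ne hnn (Ne.symm hne)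
    nlinarith

lemma inv_norm_le {c : ℝ} (hc : 0 < c) {M : Matrix (Fin d) (Fin d) ℝ}
    (h : (M - c • (1 : Matrix (Fin d) (Fin d) ℝ)).PosSemidef) : opNorm M⁻¹ ≤ 1 / c := by
  have hdet : IsUnit M.det := (posdef_of hc h).det_pos.ne'.isUnit
  unfold opNorm
  refine ContinuousLinearMap.opNorm_le_bound _ (by positivity) fun y => ?_
  set x := Matrix.toEuclideanCLM (𝕜 := ℝ) M⁻¹ y with hx
  have hMx : Matrix.toEuclideanCLM (𝕜 := ℝ) M x = y := by
    rw [hx, ← ContinuousLinearMap.mul_apply, ← _root_.map_mul, Matrix.mul_nonsing_inv _ hdet,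
      _root_.map_one, ContinuousLinearMap.one_apply]
  have h1 : c * ‖x‖ ^ 2 ≤ inner ℝ x (Matrix.toEuclideanCLM (𝕜 := ℝ) M x) := psd_lower h x
  rw [hMx] at h1
  have h2 : (inner ℝ x y : ℝ) ≤ ‖x‖ * ‖y‖ := real_inner_le_norm x y
  rcases eq_or_lt_of_le (norm_nonneg x) with h3 | h3
  · rw [← h3]; positivity
  · have h4 : c * ‖x‖ ≤ ‖y‖ := by nlinarith
    rw [div_mul_eq_mul_div, one_mul, le_div_iff₀ hc, mul_comm]
    exact h4

lemma psd_of_small {E : Matrix (Fin d) (Fin d) ℝ} {δ : ℝ} (hE : E.IsSymm) (h : opNorm E ≤ δ) :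
    (E + δ • (1 : Matrix (Fin d) (Fin d) ℝ)).PosSemidef := by
  refine Matrix.PosSemidef.of_dotProduct_mulVec_nonneg ?_ ?_
  · rw [Matrix.IsHermitian, Matrix.conjTranspose_eq_transpose_of_trivial, Matrix.transpose_add,
      Matrix.transpose_smul, Matrix.transpose_one, hE.eq]
  · intro v
    rw [star_trivial, Matrix.add_mulVec, dotProduct_add, Matrix.smul_mulVec,
      Matrix.one_mulVec, dotProduct_smul, smul_eq_mul]
    set x : EuclideanSpace ℝ (Fin d) := (WithLp.equiv 2 _).symm v with hxdef
    have hveq : WithLp.equiv 2 _ x = v := rfl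
    have heq : (inner ℝ x (Matrix.toEuclideanCLM (𝕜 := ℝ) E x) : ℝ) = v ⬝ᵥ (E *ᵥ v) := by
      rw [inner_toECLM, hveq]
    have hn : ‖x‖ ^ 2 = v ⬝ᵥ v := by rw [← dot_self_eq, hveq]
    have hb : |(inner ℝ x (Matrix.toEuclideanCLM (𝕜 := ℝ) E x) : ℝ)| ≤ δ * ‖x‖ ^ 2 := by
      have h1 := abs_real_inner_le_norm x (Matrix.toEuclideanCLM (𝕜 := ℝ) E x)
      have h2 : ‖Matrix.toEuclideanCLM (𝕜 := ℝ) E x‖ ≤ opNorm E * ‖x‖ :=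
        ContinuousLinearMap.le_opNorm _ x
      have h3 : 0 ≤ ‖x‖ := norm_nonneg x
      nlinarith [opNorm_nonneg' E]
    have hble := (abs_le.mp hb).1
    rw [heq, hn] at hble
    rw [hn] at hb
    linarith [hble]

lemma resolvent (A B : Matrix (Fin d) (Fin d) ℝ) (hA : IsUnit A.det) (hB : IsUnit B.det) :
    B⁻¹ = A⁻¹ - A⁻¹ * (B - A) * A⁻¹ + A⁻¹ * (B - A) * A⁻¹ * (B - A) * B⁻¹ := by
  have h1 : B⁻¹ = A⁻¹ - A⁻¹ * (B - A) * B⁻¹ := by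
    have h2 : A⁻¹ * B * B⁻¹ = A⁻¹ := by
      rw [Matrix.mul_assoc, Matrix.mul_nonsing_inv _ hB, Matrix.mul_one]
    have h3 : A⁻¹ * B = 1 + A⁻¹ * (B - A) := by
      rw [Matrix.mul_sub, Matrix.nonsing_inv_mul _ hA]; noncomm_ring
    rw [h3, Matrix.add_mul, Matrix.one_mul] at h2
    exact eq_sub_of_add_eq h2
  calc B⁻¹ = A⁻¹ - A⁻¹ * (B - A) * B⁻¹ := h1
    _ = A⁻¹ - A⁻¹ * (B - A) * (A⁻¹ - A⁻¹ * (B - A) * B⁻¹) := by rw [← h1]; exact h1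
    _ = _ := by noncomm_ring

end Stmt13Aux

set_option maxHeartbeats 1000000 in
open Stmt13Aux in
theorem stmt_13 {d K : ℕ} (hK : 0 < K)
    (lam L δ μ γ : ℝ) (hlam : 0 < lam) (hδ : lam < 2 * Real.sqrt 2 * δ) (hlamL : lam ≤ L)
    (hμ : μ = 8 * δ ^ 2 / lam - lam) (hγ : γ = lam ^ 2 / (192 * δ ^ 2))
    (H : Matrix (Fin d) (Fin d) ℝ) (Hk : Fin K → Matrix (Fin d) (Fin d) ℝ)
    (hHs : H.IsSymm) (hHks : ∀ k, (Hk k).IsSymm)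
    (hlb : (H - lam • (1 : Matrix (Fin d) (Fin d) ℝ)).PosSemidef)
    (hub : (L • (1 : Matrix (Fin d) (Fin d) ℝ) - H).PosSemidef)
    (hclose : ∀ k, opNorm (Hk k - H) ≤ δ)
    (hH : H = (1 / (K : ℝ)) • ∑ k, Hk k) :
    opNorm (((1 / (K : ℝ)) • ∑ k, (Hk k + μ • (1 : Matrix (Fin d) (Fin d) ℝ))⁻¹) * H - 1)
      + (γ / (K : ℝ)) * ∑ k, opNorm ((Hk k + μ • (1 : Matrix (Fin d) (Fin d) ℝ))⁻¹ * H)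
      ≤ 1 - lam ^ 2 / (24 * δ ^ 2) := by
  classical
  have hKne : (K : ℝ) ≠ 0 := Nat.cast_ne_zero.mpr hK.ne'
  have hsqrt2 : Real.sqrt 2 ^ 2 = 2 := Real.sq_sqrt (by norm_num)
  have hsqrt2nn : (0 : ℝ) ≤ Real.sqrt 2 := Real.sqrt_nonneg 2
  have hδpos : 0 < δ := by nlinarith
  have hlam2 : lam ^ 2 < 8 * δ ^ 2 := by nlinarith
  have hμpos : 0 < μ := by
    rw [hμ, sub_pos, lt_div_iff₀ hlam]; nlinarith
  have hspos : 0 < lam + μ := by linarith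
  have hs : lam + μ = 8 * δ ^ 2 / lam := by rw [hμ]; ring
  have hmulam : μ * lam = 8 * δ ^ 2 - lam ^ 2 := by
    rw [hμ, sub_mul, div_mul_cancel₀ _ hlam.ne']; ring
  have hskpos : 0 < lam + μ - δ := by
    rw [hs, sub_pos, lt_div_iff₀ hlam]; nlinarith
  -- positive definiteness facts
  have hAshift : (H + μ • (1 : Matrix (Fin d) (Fin d) ℝ)
      - (lam + μ) • (1 : Matrix (Fin d) (Fin d) ℝ)).PosSemidef := by
    have he : H + μ • (1 : Matrix (Fin d) (Fin d) ℝ) - (lam + μ) • (1 : Matrix (Fin d) (Fin d) ℝ)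
        = H - lam • (1 : Matrix (Fin d) (Fin d) ℝ) := by
      rw [add_smul]; abel
    rw [he]; exact hlb
  have hAdet : IsUnit (H + μ • (1 : Matrix (Fin d) (Fin d) ℝ)).det :=
    (posdef_of hspos hAshift).det_pos.ne'.isUnit
  have hAinv : opNorm (H + μ • (1 : Matrix (Fin d) (Fin d) ℝ))⁻¹ ≤ 1 / (lam + μ) :=
    inv_norm_le hspos hAshift
  have hAkshift : ∀ k, (Hk k + μ • (1 : Matrix (Fin d) (Fin d) ℝ)
      - (lam + μ - δ) • (1 : Matrix (Fin d) (Fin d) ℝ)).PosSemidef := by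
    intro k
    have he : Hk k + μ • (1 : Matrix (Fin d) (Fin d) ℝ)
        - (lam + μ - δ) • (1 : Matrix (Fin d) (Fin d) ℝ)
        = (H - lam • (1 : Matrix (Fin d) (Fin d) ℝ))
          + ((Hk k - H) + δ • (1 : Matrix (Fin d) (Fin d) ℝ)) := by
      rw [sub_smul, add_smul]; abel
    rw [he]
    exact hlb.add (psd_of_small ((hHks k).sub hHs) (hclose k))
  have hAkdet : ∀ k, IsUnit (Hk k + μ • (1 : Matrix (Fin d) (Fin d) ℝ)).det := fun k =>
    (posdef_of hskpos (hAkshift k)).det_pos.ne'.isUnit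
  have hAkinv : ∀ k, opNorm (Hk k + μ • (1 : Matrix (Fin d) (Fin d) ℝ))⁻¹ ≤ 1 / (lam + μ - δ) :=
    fun k => inv_norm_le hskpos (hAkshift k)
  -- sum of deviations is zero
  have hEsum : ∑ k, (Hk k - H) = 0 := by
    have h1 : ∑ k, Hk k = (K : ℝ) • H := by
      rw [hH, smul_smul, mul_one_div, div_self hKne, one_smul]
    rw [Finset.sum_sub_distrib, h1, Finset.sum_const, Finset.card_univ, Fintype.card_fin,
      sub_eq_zero, Nat.cast_smul_eq_nsmul]
  -- per-k identity : Ak⁻¹ H = 1 - Bk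
  have hinvH : ∀ k, (Hk k + μ • (1 : Matrix (Fin d) (Fin d) ℝ))⁻¹ * H
      = 1 - (Hk k + μ • (1 : Matrix (Fin d) (Fin d) ℝ))⁻¹
          * (μ • (1 : Matrix (Fin d) (Fin d) ℝ) + (Hk k - H)) := by
    intro k
    have hHeq : H = (Hk k + μ • (1 : Matrix (Fin d) (Fin d) ℝ))
        - (μ • (1 : Matrix (Fin d) (Fin d) ℝ) + (Hk k - H)) := by abel
    conv_lhs => rw [hHeq]
    rw [Matrix.mul_sub, Matrix.nonsing_inv_mul _ (hAkdet k)]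
  -- bound on Bk
  have hq3 : (μ + δ) * (1 / (lam + μ - δ)) ≤ 3 := by
    rw [mul_one_div, div_le_iff₀ hskpos]
    nlinarith [hmulam, sq_nonneg (lam - 2 * δ), hlam]
  have hμ1 : opNorm (μ • (1 : Matrix (Fin d) (Fin d) ℝ)) ≤ μ := by
    rw [opNorm_smul', abs_of_pos hμpos]
    nlinarith [opNorm_one_le' (d := d), hμpos]
  have hBk : ∀ k, opNorm ((Hk k + μ • (1 : Matrix (Fin d) (Fin d) ℝ))⁻¹
      * (μ • (1 : Matrix (Fin d) (Fin d) ℝ) + (Hk k - H))) ≤ 3 := by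
    intro k
    have h1 : opNorm (μ • (1 : Matrix (Fin d) (Fin d) ℝ) + (Hk k - H)) ≤ μ + δ := by
      refine le_trans (opNorm_add_le' _ _) ?_
      linarith [hclose k]
    calc opNorm ((Hk k + μ • (1 : Matrix (Fin d) (Fin d) ℝ))⁻¹
          * (μ • (1 : Matrix (Fin d) (Fin d) ℝ) + (Hk k - H)))
        ≤ opNorm (Hk k + μ • (1 : Matrix (Fin d) (Fin d) ℝ))⁻¹
          * opNorm (μ • (1 : Matrix (Fin d) (Fin d) ℝ) + (Hk k - H)) := opNorm_mul_le' _ _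
      _ ≤ (1 / (lam + μ - δ)) * (μ + δ) := by
          apply mul_le_mul (hAkinv k) h1 (opNorm_nonneg' _) (by positivity)
      _ ≤ 3 := by rw [mul_comm]; exact hq3
  -- second sum bound
  have hAkH : ∀ k, opNorm ((Hk k + μ • (1 : Matrix (Fin d) (Fin d) ℝ))⁻¹ * H) ≤ 4 := by
    intro k
    rw [hinvH k]
    refine le_trans (opNorm_sub_le' _ _) ?_
    linarith [opNorm_one_le' (d := d), hBk k]
  have hγpos : 0 < γ := by rw [hγ]; positivity
  have hsecond : (γ / (K : ℝ)) * ∑ k, opNorm ((Hk k + μ • (1 : Matrix (Fin d) (Fin d) ℝ))⁻¹ * H)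
      ≤ γ * 4 := by
    have h1 : ∑ k, opNorm ((Hk k + μ • (1 : Matrix (Fin d) (Fin d) ℝ))⁻¹ * H) ≤ (K : ℝ) * 4 := by
      calc ∑ k, opNorm ((Hk k + μ • (1 : Matrix (Fin d) (Fin d) ℝ))⁻¹ * H)
          ≤ ∑ _k : Fin K, (4 : ℝ) := Finset.sum_le_sum fun k _ => hAkH k
        _ = (K : ℝ) * 4 := by
            rw [Finset.sum_const, Finset.card_univ, Fintype.card_fin, nsmul_eq_mul]
    calc (γ / (K : ℝ)) * ∑ k, opNorm ((Hk k + μ • (1 : Matrix (Fin d) (Fin d) ℝ))⁻¹ * H)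
        ≤ (γ / (K : ℝ)) * ((K : ℝ) * 4) := by
          apply mul_le_mul_of_nonneg_left h1 (by positivity)
      _ = γ * 4 := by field_simp
  -- expansion of Bk
  have hBkexp : ∀ k, (Hk k + μ • (1 : Matrix (Fin d) (Fin d) ℝ))⁻¹
        * (μ • (1 : Matrix (Fin d) (Fin d) ℝ) + (Hk k - H))
      = (H + μ • (1 : Matrix (Fin d) (Fin d) ℝ))⁻¹ * (μ • (1 : Matrix (Fin d) (Fin d) ℝ))
        + ((H + μ • (1 : Matrix (Fin d) (Fin d) ℝ))⁻¹ * (Hk k - H)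
            - (H + μ • (1 : Matrix (Fin d) (Fin d) ℝ))⁻¹ * (Hk k - H)
              * (H + μ • (1 : Matrix (Fin d) (Fin d) ℝ))⁻¹ * (μ • (1 : Matrix (Fin d) (Fin d) ℝ)))
        + ((H + μ • (1 : Matrix (Fin d) (Fin d) ℝ))⁻¹ * (Hk k - H)
            * (H + μ • (1 : Matrix (Fin d) (Fin d) ℝ))⁻¹ * (Hk k - H))
          * ((Hk k + μ • (1 : Matrix (Fin d) (Fin d) ℝ))⁻¹
              * (μ • (1 : Matrix (Fin d) (Fin d) ℝ) + (Hk k - H)) - 1) := by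
    intro k
    have hres : (Hk k + μ • (1 : Matrix (Fin d) (Fin d) ℝ))⁻¹
        = (H + μ • (1 : Matrix (Fin d) (Fin d) ℝ))⁻¹
          - (H + μ • (1 : Matrix (Fin d) (Fin d) ℝ))⁻¹ * (Hk k - H)
            * (H + μ • (1 : Matrix (Fin d) (Fin d) ℝ))⁻¹
          + (H + μ • (1 : Matrix (Fin d) (Fin d) ℝ))⁻¹ * (Hk k - H)
            * (H + μ • (1 : Matrix (Fin d) (Fin d) ℝ))⁻¹ * (Hk k - H)
            * (Hk k + μ • (1 : Matrix (Fin d) (Fin d) ℝ))⁻¹ := by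
      have h0 := resolvent (H + μ • (1 : Matrix (Fin d) (Fin d) ℝ))
        (Hk k + μ • (1 : Matrix (Fin d) (Fin d) ℝ)) hAdet (hAkdet k)
      rw [show (Hk k + μ • (1 : Matrix (Fin d) (Fin d) ℝ))
          - (H + μ • (1 : Matrix (Fin d) (Fin d) ℝ)) = Hk k - H by abel] at h0
      exact h0
    conv_lhs => rw [hres]
    generalize (H + μ • (1 : Matrix (Fin d) (Fin d) ℝ))⁻¹ = P
    generalize (Hk k + μ • (1 : Matrix (Fin d) (Fin d) ℝ))⁻¹ = Q
    generalize Hk k - H = E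
    generalize μ • (1 : Matrix (Fin d) (Fin d) ℝ) = M
    noncomm_ring
  -- middle sum vanishes
  have hmid : ∑ k, ((H + μ • (1 : Matrix (Fin d) (Fin d) ℝ))⁻¹ * (Hk k - H)
      - (H + μ • (1 : Matrix (Fin d) (Fin d) ℝ))⁻¹ * (Hk k - H)
        * (H + μ • (1 : Matrix (Fin d) (Fin d) ℝ))⁻¹ * (μ • (1 : Matrix (Fin d) (Fin d) ℝ)))
      = 0 := by
    have hf : ∀ k, (H + μ • (1 : Matrix (Fin d) (Fin d) ℝ))⁻¹ * (Hk k - H)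
        - (H + μ • (1 : Matrix (Fin d) (Fin d) ℝ))⁻¹ * (Hk k - H)
          * (H + μ • (1 : Matrix (Fin d) (Fin d) ℝ))⁻¹ * (μ • (1 : Matrix (Fin d) (Fin d) ℝ))
        = (H + μ • (1 : Matrix (Fin d) (Fin d) ℝ))⁻¹ * (Hk k - H)
          * (1 - (H + μ • (1 : Matrix (Fin d) (Fin d) ℝ))⁻¹
              * (μ • (1 : Matrix (Fin d) (Fin d) ℝ))) := by
      intro k
      generalize (H + μ • (1 : Matrix (Fin d) (Fin d) ℝ))⁻¹ = P
      generalize Hk k - H = E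
      generalize μ • (1 : Matrix (Fin d) (Fin d) ℝ) = M
      noncomm_ring
    rw [Finset.sum_congr rfl fun k _ => hf k, ← Finset.sum_mul, ← Finset.mul_sum, hEsum,
      Matrix.mul_zero, Matrix.zero_mul]
  -- sum identity
  have hsum : ∑ k, (Hk k + μ • (1 : Matrix (Fin d) (Fin d) ℝ))⁻¹
        * (μ • (1 : Matrix (Fin d) (Fin d) ℝ) + (Hk k - H))
      = (K : ℕ) • ((H + μ • (1 : Matrix (Fin d) (Fin d) ℝ))⁻¹
          * (μ • (1 : Matrix (Fin d) (Fin d) ℝ)))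
        + ∑ k, ((H + μ • (1 : Matrix (Fin d) (Fin d) ℝ))⁻¹ * (Hk k - H)
            * (H + μ • (1 : Matrix (Fin d) (Fin d) ℝ))⁻¹ * (Hk k - H))
          * ((Hk k + μ • (1 : Matrix (Fin d) (Fin d) ℝ))⁻¹
              * (μ • (1 : Matrix (Fin d) (Fin d) ℝ) + (Hk k - H)) - 1) := by
    rw [Finset.sum_congr rfl fun k _ => hBkexp k, Finset.sum_add_distrib,
      Finset.sum_add_distrib, hmid, add_zero, Finset.sum_const, Finset.card_univ,
      Fintype.card_fin]
  -- first term identity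
  have hT : ((1 / (K : ℝ)) • ∑ k, (Hk k + μ • (1 : Matrix (Fin d) (Fin d) ℝ))⁻¹) * H - 1
      = -((1 / (K : ℝ)) • ∑ k, (Hk k + μ • (1 : Matrix (Fin d) (Fin d) ℝ))⁻¹
          * (μ • (1 : Matrix (Fin d) (Fin d) ℝ) + (Hk k - H))) := by
    rw [smul_mul_assoc, Finset.sum_mul, Finset.sum_congr rfl fun k _ => hinvH k,
      Finset.sum_sub_distrib, Finset.sum_const, Finset.card_univ, Fintype.card_fin, smul_sub]
    have hone : (1 / (K : ℝ)) • ((K : ℕ) • (1 : Matrix (Fin d) (Fin d) ℝ)) = 1 := by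
      rw [← Nat.cast_smul_eq_nsmul ℝ, smul_smul, one_div, inv_mul_cancel₀ hKne, one_smul]
    rw [hone]; abel
  -- norm bounds for the pieces
  have hA1 : opNorm ((H + μ • (1 : Matrix (Fin d) (Fin d) ℝ))⁻¹
      * (μ • (1 : Matrix (Fin d) (Fin d) ℝ))) ≤ (1 / (lam + μ)) * μ := by
    refine le_trans (opNorm_mul_le' _ _) ?_
    exact mul_le_mul hAinv hμ1 (opNorm_nonneg' _) (by positivity)
  have hCk : ∀ k, opNorm (((H + μ • (1 : Matrix (Fin d) (Fin d) ℝ))⁻¹ * (Hk k - H)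
        * (H + μ • (1 : Matrix (Fin d) (Fin d) ℝ))⁻¹ * (Hk k - H))
      * ((Hk k + μ • (1 : Matrix (Fin d) (Fin d) ℝ))⁻¹
          * (μ • (1 : Matrix (Fin d) (Fin d) ℝ) + (Hk k - H)) - 1))
      ≤ (1 / (lam + μ)) * δ * ((1 / (lam + μ)) * δ) * 4 := by
    intro k
    have ha : (0:ℝ) ≤ 1 / (lam + μ) := by positivity
    have h1 : opNorm ((H + μ • (1 : Matrix (Fin d) (Fin d) ℝ))⁻¹ * (Hk k - H))
        ≤ (1 / (lam + μ)) * δ :=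
      le_trans (opNorm_mul_le' _ _)
        (mul_le_mul hAinv (hclose k) (opNorm_nonneg' _) ha)
    have h2 : opNorm ((H + μ • (1 : Matrix (Fin d) (Fin d) ℝ))⁻¹ * (Hk k - H)
        * (H + μ • (1 : Matrix (Fin d) (Fin d) ℝ))⁻¹) ≤ (1 / (lam + μ)) * δ * (1 / (lam + μ)) :=
      le_trans (opNorm_mul_le' _ _)
        (mul_le_mul h1 hAinv (opNorm_nonneg' _) (by positivity))
    have h3 : opNorm ((H + μ • (1 : Matrix (Fin d) (Fin d) ℝ))⁻¹ * (Hk k - H)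
        * (H + μ • (1 : Matrix (Fin d) (Fin d) ℝ))⁻¹ * (Hk k - H))
        ≤ (1 / (lam + μ)) * δ * (1 / (lam + μ)) * δ :=
      le_trans (opNorm_mul_le' _ _)
        (mul_le_mul h2 (hclose k) (opNorm_nonneg' _) (by positivity))
    have h4 : opNorm ((Hk k + μ • (1 : Matrix (Fin d) (Fin d) ℝ))⁻¹
        * (μ • (1 : Matrix (Fin d) (Fin d) ℝ) + (Hk k - H)) - 1) ≤ 4 := by
      refine le_trans (opNorm_sub_le' _ _) ?_
      linarith [opNorm_one_le' (d := d), hBk k]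
    calc opNorm _ ≤ opNorm ((H + μ • (1 : Matrix (Fin d) (Fin d) ℝ))⁻¹ * (Hk k - H)
          * (H + μ • (1 : Matrix (Fin d) (Fin d) ℝ))⁻¹ * (Hk k - H))
        * opNorm ((Hk k + μ • (1 : Matrix (Fin d) (Fin d) ℝ))⁻¹
            * (μ • (1 : Matrix (Fin d) (Fin d) ℝ) + (Hk k - H)) - 1) := opNorm_mul_le' _ _
      _ ≤ (1 / (lam + μ)) * δ * (1 / (lam + μ)) * δ * 4 := by
          apply mul_le_mul h3 h4 (opNorm_nonneg' _) (by positivity)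
      _ = (1 / (lam + μ)) * δ * ((1 / (lam + μ)) * δ) * 4 := by ring
  -- first term bound
  have hfirst : opNorm (((1 / (K : ℝ)) • ∑ k, (Hk k + μ • (1 : Matrix (Fin d) (Fin d) ℝ))⁻¹) * H - 1)
      ≤ (1 / (lam + μ)) * μ + (1 / (lam + μ)) * δ * ((1 / (lam + μ)) * δ) * 4 := by
    rw [hT, opNorm_neg', opNorm_smul', abs_of_pos (by positivity : (0:ℝ) < 1 / (K:ℝ))]
    have hsb : opNorm (∑ k, (Hk k + μ • (1 : Matrix (Fin d) (Fin d) ℝ))⁻¹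
          * (μ • (1 : Matrix (Fin d) (Fin d) ℝ) + (Hk k - H)))
        ≤ (K : ℝ) * ((1 / (lam + μ)) * μ + (1 / (lam + μ)) * δ * ((1 / (lam + μ)) * δ) * 4) := by
      rw [hsum]
      refine le_trans (opNorm_add_le' _ _) ?_
      have hn1 : opNorm ((K : ℕ) • ((H + μ • (1 : Matrix (Fin d) (Fin d) ℝ))⁻¹
          * (μ • (1 : Matrix (Fin d) (Fin d) ℝ)))) ≤ (K : ℝ) * ((1 / (lam + μ)) * μ) := by
        rw [← Nat.cast_smul_eq_nsmul ℝ, opNorm_smul', abs_of_nonneg (by positivity : (0:ℝ) ≤ (K:ℝ))]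
        exact mul_le_mul_of_nonneg_left hA1 (by positivity)
      have hn2 : opNorm (∑ k, ((H + μ • (1 : Matrix (Fin d) (Fin d) ℝ))⁻¹ * (Hk k - H)
            * (H + μ • (1 : Matrix (Fin d) (Fin d) ℝ))⁻¹ * (Hk k - H))
          * ((Hk k + μ • (1 : Matrix (Fin d) (Fin d) ℝ))⁻¹
              * (μ • (1 : Matrix (Fin d) (Fin d) ℝ) + (Hk k - H)) - 1))
          ≤ (K : ℝ) * ((1 / (lam + μ)) * δ * ((1 / (lam + μ)) * δ) * 4) := by
        refine le_trans (opNorm_sum_le' _ _) ?_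
        calc ∑ k, opNorm _ ≤ ∑ _k : Fin K, ((1 / (lam + μ)) * δ * ((1 / (lam + μ)) * δ) * 4) :=
              Finset.sum_le_sum fun k _ => hCk k
          _ = (K : ℝ) * ((1 / (lam + μ)) * δ * ((1 / (lam + μ)) * δ) * 4) := by
              rw [Finset.sum_const, Finset.card_univ, Fintype.card_fin, nsmul_eq_mul]
      linarith
    calc (1 / (K : ℝ)) * opNorm (∑ k, (Hk k + μ • (1 : Matrix (Fin d) (Fin d) ℝ))⁻¹
          * (μ • (1 : Matrix (Fin d) (Fin d) ℝ) + (Hk k - H)))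
        ≤ (1 / (K : ℝ)) * ((K : ℝ) * ((1 / (lam + μ)) * μ
            + (1 / (lam + μ)) * δ * ((1 / (lam + μ)) * δ) * 4)) := by
          apply mul_le_mul_of_nonneg_left hsb (by positivity)
      _ = (1 / (lam + μ)) * μ + (1 / (lam + μ)) * δ * ((1 / (lam + μ)) * δ) * 4 := by
          field_simp
  -- final arithmetic
  have ha : 1 / (lam + μ) = lam / (8 * δ ^ 2) := by
    rw [hs, one_div_div]
  have hfinal : (1 / (lam + μ)) * μ + (1 / (lam + μ)) * δ * ((1 / (lam + μ)) * δ) * 4 + γ * 4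
      = 1 - lam ^ 2 / (24 * δ ^ 2) := by
    rw [ha, hμ, hγ]
    field_simp
    ring
  linarith [add_le_add hfirst hsecond]
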